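/- Let h = ι_X for a closed convex set X ⊆ ℝ^p, let g, f_1,…,f_m be convex and twice continuously differentiable, and let (x*, y*, z*) be a KKT point with x* ∈ int(X). Suppose there is J ⊆ {1,…,m} with f_j(x*) = 0 and z_j* > 0 for j ∈ J, and f_j(x*) < 0 and z_j* = 0 for j ∉ J, and suppose H* := ∇²g(x*) + βAᵀA + ∑_{j∈J}(z_j*∇²f_j(x*) + β∇f_j(x*)∇f_j(x*)ᵀ) is positive definite with smallest eigenvalue μ > 0. Then there exists γ > 0 such that: (i) for every (x, y, z) with max(‖x − x*‖, ‖y − y*‖, ‖z − z*‖) ≤ γ one has x ∈ int(X), β f_j(x) + z_j > 0 for all j ∈ J, β f_j(x) + z_j < 0 for all j ∉ J, and the Hessian ∇²_x L_β(x,y,z) = ∇²g(x) + βAᵀA + ∑_{j∈J}((β f_j(x) + z_j)∇²f_j(x) + β∇f_j(x)∇f_j(x)ᵀ) satisfies ∇²_x L_β(x,y,z) ⪰ (μ/2)I; and (ii) for every x with ‖x − x*‖ ≤ γ, g(x) − g(x*) + ⟨y*, Ax − b⟩ + (β/2)‖Ax − b‖² + Ψ_β(x, z*) − Ψ_β(x*,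 z*) ≥ (μ/4)‖x − x*‖². -/

import Mathlib

open scoped RealInnerProductSpace

noncomputable section

/-- The function `ψ_β(u,v)` used in the classic augmented Lagrangian. -/
def psi (β u v : ℝ) : ℝ :=
  if 0 ≤ β * u + v then u * v + β / 2 * u ^ 2 else -(v ^ 2) / (2 * β)

/-- `Ψ_β(x,z) = ∑_j ψ_β(f_j(x), z_j)`. -/
def PsiAug {p m : ℕ} (β : ℝ) (f : Fin m → EuclideanSpace ℝ (Fin p) → ℝ)
    (x : EuclideanSpace ℝ (Fin p)) (z : EuclideanSpace ℝ (Fin m)) : ℝ :=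
  ∑ j, psi β (f j x) (z j)

/-- The rank-one operator `∇f_j(x) ∇f_j(x)ᵀ`, i.e. `u ↦ ⟨∇f_j(x), u⟩ ∇f_j(x)`. -/
def rankOne {p : ℕ} (v : EuclideanSpace ℝ (Fin p)) :
    EuclideanSpace ℝ (Fin p) →L[ℝ] EuclideanSpace ℝ (Fin p) :=
  (innerSL ℝ v).smulRight v

/-- The Hessian `∇²_x L_β(x,y,z)` of the augmented Lagrangian (on the region where
`β f_j(x) + z_j > 0` for `j ∈ J` and `< 0` for `j ∉ J`). -/
def HessL {p q m : ℕ} (β : ℝ) (f : Fin m → EuclideanSpace ℝ (Fin p) → ℝ)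
    (f' : Fin m → EuclideanSpace ℝ (Fin p) → EuclideanSpace ℝ (Fin p))
    (g'' : EuclideanSpace ℝ (Fin p) → EuclideanSpace ℝ (Fin p) →L[ℝ] EuclideanSpace ℝ (Fin p))
    (f'' : Fin m → EuclideanSpace ℝ (Fin p) →
      EuclideanSpace ℝ (Fin p) →L[ℝ] EuclideanSpace ℝ (Fin p))
    (A : EuclideanSpace ℝ (Fin p) →L[ℝ] EuclideanSpace ℝ (Fin q))
    (J : Finset (Fin m)) (x : EuclideanSpace ℝ (Fin p)) (z : EuclideanSpace ℝ (Fin m)) :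
    EuclideanSpace ℝ (Fin p) →L[ℝ] EuclideanSpace ℝ (Fin p) :=
  g'' x + β • ((ContinuousLinearMap.adjoint A).comp A)
    + ∑ j ∈ J, ((β * f j x + z j) • f'' j x + β • rankOne (f' j x))


private lemma contGrad {p : ℕ} {g : EuclideanSpace ℝ (Fin p) → ℝ}
    {g' : EuclideanSpace ℝ (Fin p) → EuclideanSpace ℝ (Fin p)}
    {g'' : EuclideanSpace ℝ (Fin p) → EuclideanSpace ℝ (Fin p) →L[ℝ] EuclideanSpace ℝ (Fin p)}
    (hgsm : ContDiff ℝ 2 g) (hg : ∀ x, HasGradientAt g (g' x) x)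
    (hg'' : ∀ x, HasFDerivAt g' (g'' x) x) : Continuous g' ∧ Continuous g'' := by
  have h1 : ContDiff ℝ 1 (fderiv ℝ g) := hgsm.fderiv_right (by norm_num)
  have hgeq : g' = fun x => (InnerProductSpace.toDual ℝ (EuclideanSpace ℝ (Fin p))).symm
      (fderiv ℝ g x) := by
    funext x
    have := (hg x).hasFDerivAt.fderiv
    rw [this]; simp
  have h2 : ContDiff ℝ 1 g' := by
    rw [hgeq]
    exact (InnerProductSpace.toDual ℝ (EuclideanSpace ℝ (Fin p))).symm.contDiff.comp h1
  have h3 : Continuous (fun x => fderiv ℝ g' x) :=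
    (h2.fderiv_right (m := 0) (by norm_num)).continuous
  have h4 : (fun x => fderiv ℝ g' x) = g'' := funext fun x => (hg'' x).fderiv
  exact ⟨h2.continuous, h4 ▸ h3⟩

private lemma contRankOne {p : ℕ} : Continuous (fun v : EuclideanSpace ℝ (Fin p) => rankOne v) := by
  unfold rankOne
  exact (ContinuousLinearMap.smulRightL ℝ (EuclideanSpace ℝ (Fin p))
      (EuclideanSpace ℝ (Fin p))).continuous₂.comp
    ((innerSL ℝ).continuous.prodMk continuous_id)

set_option maxHeartbeats 1000000 in
/-- Proposition: local positive definiteness and strong convexity near a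
non-degenerate KKT point, for `h = ι_X`. -/
theorem stmt12 {p q m : ℕ} (β : ℝ) (hβ : 0 < β)
    (X : Set (EuclideanSpace ℝ (Fin p))) (hXclosed : IsClosed X) (hXconv : Convex ℝ X)
    (g : EuclideanSpace ℝ (Fin p) → ℝ)
    (f : Fin m → EuclideanSpace ℝ (Fin p) → ℝ)
    (g' : EuclideanSpace ℝ (Fin p) → EuclideanSpace ℝ (Fin p))
    (f' : Fin m → EuclideanSpace ℝ (Fin p) → EuclideanSpace ℝ (Fin p))
    (g'' : EuclideanSpace ℝ (Fin p) → EuclideanSpace ℝ (Fin p) →L[ℝ] EuclideanSpace ℝ (Fin p))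
    (f'' : Fin m → EuclideanSpace ℝ (Fin p) →
      EuclideanSpace ℝ (Fin p) →L[ℝ] EuclideanSpace ℝ (Fin p))
    (A : EuclideanSpace ℝ (Fin p) →L[ℝ] EuclideanSpace ℝ (Fin q))
    (b : EuclideanSpace ℝ (Fin q))
    (hgconv : ConvexOn ℝ Set.univ g) (hfconv : ∀ j, ConvexOn ℝ Set.univ (f j))
    (hgsm : ContDiff ℝ 2 g) (hfsm : ∀ j, ContDiff ℝ 2 (f j))
    (hg : ∀ x, HasGradientAt g (g' x) x)
    (hf : ∀ j x, HasGradientAt (f j) (f' j x) x)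
    (hg'' : ∀ x, HasFDerivAt g' (g'' x) x)
    (hf'' : ∀ j x, HasFDerivAt (f' j) (f'' j x) x)
    -- the KKT point `(x*, y*, z*)` with `x* ∈ int(X)`
    (xs : EuclideanSpace ℝ (Fin p)) (ys : EuclideanSpace ℝ (Fin q))
    (zs : EuclideanSpace ℝ (Fin m))
    (hxs : xs ∈ interior X)
    (hkkt1 : ∃ s : EuclideanSpace ℝ (Fin p), (∀ u ∈ X, ⟪s, u - xs⟫ ≤ 0) ∧
      g' xs + s + (ContinuousLinearMap.adjoint A) ys + ∑ j, zs j • f' j xs = 0)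
    (hkkt2 : A xs = b)
    (hkkt3 : ∀ j, 0 ≤ zs j ∧ f j xs ≤ 0 ∧ zs j * f j xs = 0)
    -- the non-degeneracy structure
    (J : Finset (Fin m))
    (hJin : ∀ j ∈ J, f j xs = 0 ∧ 0 < zs j)
    (hJout : ∀ j ∉ J, f j xs < 0 ∧ zs j = 0)
    -- `H*` is positive definite with smallest eigenvalue `μ > 0`
    (μ : ℝ) (hμ : 0 < μ)
    (hH : ∀ u : EuclideanSpace ℝ (Fin p),
      μ * ‖u‖ ^ 2 ≤ ⟪u, (g'' xs + β • ((ContinuousLinearMap.adjoint A).comp A)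
        + ∑ j ∈ J, (zs j • f'' j xs + β • rankOne (f' j xs))) u⟫) :
    ∃ γ : ℝ, 0 < γ ∧
      (∀ (x : EuclideanSpace ℝ (Fin p)) (y : EuclideanSpace ℝ (Fin q))
          (z : EuclideanSpace ℝ (Fin m)),
        ‖x - xs‖ ≤ γ → ‖y - ys‖ ≤ γ → ‖z - zs‖ ≤ γ →
          x ∈ interior X ∧
          (∀ j ∈ J, 0 < β * f j x + z j) ∧
          (∀ j ∉ J, β * f j x + z j < 0) ∧
          (∀ u : EuclideanSpace ℝ (Fin p),
            μ / 2 * ‖u‖ ^ 2 ≤ ⟪u, (HessL β f f' g'' f'' A J x z) u⟫)) ∧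
      (∀ x : EuclideanSpace ℝ (Fin p), ‖x - xs‖ ≤ γ →
        μ / 4 * ‖x - xs‖ ^ 2
          ≤ g x - g xs + ⟪ys, A x - b⟫ + β / 2 * ‖A x - b‖ ^ 2
            + PsiAug β f x zs - PsiAug β f xs zs) := by
  classical
  -- `s = 0` in the KKT condition
  obtain ⟨s, hs1, hs2⟩ := hkkt1
  have hs0 : s = 0 := by
    by_contra hne
    obtain ⟨r, hr, hball⟩ := Metric.isOpen_iff.1 isOpen_interior xs hxs
    have hsn : (0:ℝ) < ‖s‖ := norm_pos_iff.2 hne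
    have hεpos : (0:ℝ) < r / (2 * ‖s‖) := by positivity
    have hmem : xs + (r / (2 * ‖s‖)) • s ∈ X := by
      apply interior_subset
      apply hball
      rw [Metric.mem_ball, dist_eq_norm]
      have : xs + (r / (2 * ‖s‖)) • s - xs = (r / (2 * ‖s‖)) • s := by abel
      rw [this, norm_smul, Real.norm_eq_abs, abs_of_pos hεpos]
      rw [div_mul_eq_mul_div, mul_comm]
      rw [div_lt_iff₀ (by positivity)]
      nlinarith
    have h2 := hs1 _ hmem
    have : xs + (r / (2 * ‖s‖)) • s - xs = (r / (2 * ‖s‖)) • s := by abel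
    rw [this, real_inner_smul_right, real_inner_self_eq_norm_sq] at h2
    nlinarith [mul_pos hεpos (pow_pos hsn 2)]
  rw [hs0] at hs2
  have hkkt : g' xs + (ContinuousLinearMap.adjoint A) ys + ∑ j, zs j • f' j xs = 0 := by
    simpa using hs2
  -- continuity facts
  have hfc : ∀ j, Continuous (f j) := fun j => (hfsm j).continuous
  obtain ⟨hg'c, hg''c⟩ := contGrad hgsm hg hg''
  have hf'c : ∀ j, Continuous (f' j) := fun j => (contGrad (hfsm j) (hf j) (hf'' j)).1
  have hf''c : ∀ j, Continuous (f'' j) := fun j => (contGrad (hfsm j) (hf j) (hf'' j)).2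
  set Hs := g'' xs + β • ((ContinuousLinearMap.adjoint A).comp A)
    + ∑ j ∈ J, (zs j • f'' j xs + β • rankOne (f' j xs)) with hHsdef
  -- `HessL` at the KKT point is `Hs`
  have hHeq : HessL β f f' g'' f'' A J xs zs = Hs := by
    rw [hHsdef]
    unfold HessL
    congr 1
    refine Finset.sum_congr rfl fun j hj => ?_
    rw [(hJin j hj).1, mul_zero, zero_add]
  -- continuity of the Hessian map
  have hΦ : Continuous (fun w : EuclideanSpace ℝ (Fin p) × EuclideanSpace ℝ (Fin m) =>
      HessL β f f' g'' f'' A J w.1 w.2) := by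
    unfold HessL
    refine Continuous.add (Continuous.add (hg''c.comp continuous_fst) continuous_const) ?_
    refine continuous_finset_sum _ fun j _ => Continuous.add ?_ ?_
    · exact Continuous.smul
        ((continuous_const.mul ((hfc j).comp continuous_fst)).add
          ((EuclideanSpace.proj j).continuous.comp continuous_snd))
        ((hf''c j).comp continuous_fst)
    · exact (continuous_const : Continuous (fun _ : EuclideanSpace ℝ (Fin p) ×
        EuclideanSpace ℝ (Fin m) => β)).smul ((contRankOne (p := p)).comp ((hf'c j).comp (continuous_fst :
        Continuous (fun w : EuclideanSpace ℝ (Fin p) × EuclideanSpace ℝ (Fin m) => w.1))))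
  -- the open neighborhood
  set cond : Fin m → Set (EuclideanSpace ℝ (Fin p) × EuclideanSpace ℝ (Fin m)) :=
    fun j => if j ∈ J then {w | 0 < β * f j w.1 + w.2 j} else {w | β * f j w.1 + w.2 j < 0}
    with hconddef
  have hcondcont : ∀ j : Fin m, Continuous (fun w : EuclideanSpace ℝ (Fin p) ×
      EuclideanSpace ℝ (Fin m) => β * f j w.1 + w.2 j) := fun j =>
    (continuous_const.mul ((hfc j).comp continuous_fst)).add
      ((EuclideanSpace.proj j).continuous.comp continuous_snd)
  have hcondopen : ∀ j, IsOpen (cond j) := by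
    intro j
    by_cases hj : j ∈ J
    · simp only [hconddef, if_pos hj]
      exact isOpen_lt continuous_const (hcondcont j)
    · simp only [hconddef, if_neg hj]
      exact isOpen_lt (hcondcont j) continuous_const
  set U : Set (EuclideanSpace ℝ (Fin p) × EuclideanSpace ℝ (Fin m)) :=
    (Prod.fst ⁻¹' interior X) ∩ ((⋂ j, cond j) ∩
      {w | ‖HessL β f f' g'' f'' A J w.1 w.2 - Hs‖ < μ/2}) with hUdef
  have hUopen : IsOpen U := by
    refine (isOpen_interior.preimage continuous_fst).inter
      ((isOpen_iInter_of_finite hcondopen).inter ?_)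
    exact isOpen_lt ((hΦ.sub continuous_const).norm) continuous_const
  have hmemU : ((xs, zs) : EuclideanSpace ℝ (Fin p) × EuclideanSpace ℝ (Fin m)) ∈ U := by
    refine ⟨hxs, Set.mem_iInter.2 fun j => ?_, ?_⟩
    · by_cases hj : j ∈ J
      · simp only [hconddef, if_pos hj, Set.mem_setOf_eq]
        show 0 < β * f j xs + zs j
        rw [(hJin j hj).1, mul_zero, zero_add]
        exact (hJin j hj).2
      · simp only [hconddef, if_neg hj, Set.mem_setOf_eq]
        show β * f j xs + zs j < 0
        rw [(hJout j hj).2, add_zero]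
        exact mul_neg_of_pos_of_neg hβ (hJout j hj).1
    · show ‖HessL β f f' g'' f'' A J xs zs - Hs‖ < μ/2
      rw [hHeq, sub_self, norm_zero]
      exact half_pos hμ
  obtain ⟨ε, hεpos, hballU⟩ := Metric.isOpen_iff.1 hUopen _ hmemU
  -- sign extraction
  have hsigns : ∀ w : EuclideanSpace ℝ (Fin p) × EuclideanSpace ℝ (Fin m), w ∈ U →
      (∀ j ∈ J, 0 < β * f j w.1 + w.2 j) ∧ (∀ j ∉ J, β * f j w.1 + w.2 j < 0) := by
    intro w hw
    constructor
    · intro j hj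
      have := Set.mem_iInter.1 hw.2.1 j
      simp only [hconddef, if_pos hj, Set.mem_setOf_eq] at this
      exact this
    · intro j hj
      have := Set.mem_iInter.1 hw.2.1 j
      simp only [hconddef, if_neg hj, Set.mem_setOf_eq] at this
      exact this
  -- positive definiteness on U
  have keyHess : ∀ w : EuclideanSpace ℝ (Fin p) × EuclideanSpace ℝ (Fin m), w ∈ U →
      ∀ u : EuclideanSpace ℝ (Fin p),
        μ/2 * ‖u‖^2 ≤ ⟪u, (HessL β f f' g'' f'' A J w.1 w.2) u⟫ := by
    intro w hw u
    have hb : ‖HessL β f f' g'' f'' A J w.1 w.2 - Hs‖ < μ/2 := hw.2.2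
    have h1 := hH u
    set D := HessL β f f' g'' f'' A J w.1 w.2 - Hs with hD
    have e1 : ⟪u, (HessL β f f' g'' f'' A J w.1 w.2) u⟫ = ⟪u, Hs u⟫ + ⟪u, D u⟫ := by
      rw [hD, ContinuousLinearMap.sub_apply, inner_sub_right]
      ring
    have e2 : |⟪u, D u⟫| ≤ ‖D‖ * ‖u‖^2 := by
      calc |⟪u, D u⟫| ≤ ‖u‖ * ‖D u‖ := abs_real_inner_le_norm _ _
        _ ≤ ‖u‖ * (‖D‖ * ‖u‖) := by
            gcongr
            exact D.le_opNorm u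
        _ = ‖D‖ * ‖u‖^2 := by ring
    have e3 : ‖D‖ * ‖u‖^2 ≤ μ/2 * ‖u‖^2 :=
      mul_le_mul_of_nonneg_right hb.le (sq_nonneg _)
    have e4 := abs_le.1 (e2.trans e3)
    rw [e1]
    linarith
  -- evaluation of the Hessian quadratic form
  have evalHess : ∀ (x' u : EuclideanSpace ℝ (Fin p)) (z : EuclideanSpace ℝ (Fin m)),
      ⟪u, (HessL β f f' g'' f'' A J x' z) u⟫
      = ⟪g'' x' u, u⟫ + β * ⟪A u, A u⟫
        + ∑ j ∈ J, (β * ⟪f' j x', u⟫ * ⟪f' j x', u⟫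
            + (z j + β * f j x') * ⟪f'' j x' u, u⟫) := by
    intro x' u z
    unfold HessL rankOne
    simp only [ContinuousLinearMap.add_apply, ContinuousLinearMap.smul_apply,
      ContinuousLinearMap.sum_apply, ContinuousLinearMap.coe_comp', Function.comp_apply,
      inner_add_right, inner_sum, inner_smul_right,
      ContinuousLinearMap.smulRight_apply, innerSL_apply_apply,
      ContinuousLinearMap.adjoint_inner_right]
    rw [real_inner_comm u (g'' x' u)]
    congr 1
    refine Finset.sum_congr rfl fun j _ => ?_
    rw [real_inner_comm u ((f'' j x') u), real_inner_comm u (f' j x')]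
    ring
  -- `Ψ_β` on the sign region
  have hPsiW : ∀ x' : EuclideanSpace ℝ (Fin p),
      (∀ j ∈ J, 0 < β * f j x' + zs j) → (∀ j ∉ J, β * f j x' + zs j < 0) →
      PsiAug β f x' zs = ∑ j ∈ J, (zs j * f j x' + β/2 * (f j x')^2) := by
    intro x' hin hout
    unfold PsiAug
    rw [← Finset.sum_subset (Finset.subset_univ J) (fun j _ hj => ?_)]
    · refine Finset.sum_congr rfl fun j hj => ?_
      unfold psi
      rw [if_pos (hin j hj).le]
      ring
    · unfold psi
      rw [if_neg (not_le.2 (hout j hj)), (hJout j hj).2]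
      norm_num
  have hPsixs : PsiAug β f xs zs = 0 := by
    rw [hPsiW xs (fun j hj => by
        rw [(hJin j hj).1, mul_zero, zero_add]; exact (hJin j hj).2)
      (fun j hj => by
        rw [(hJout j hj).2, add_zero]
        exact mul_neg_of_pos_of_neg hβ (hJout j hj).1)]
    refine Finset.sum_eq_zero fun j hj => ?_
    rw [(hJin j hj).1]
    ring
  -- the answer
  refine ⟨ε/2, by positivity, ?_, ?_⟩
  · -- part (i)
    intro x y z hx hy hz
    have hU : ((x, z) : EuclideanSpace ℝ (Fin p) × EuclideanSpace ℝ (Fin m)) ∈ U := by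
      apply hballU
      rw [Metric.mem_ball, Prod.dist_eq]
      apply max_lt <;> rw [dist_eq_norm] <;> linarith
    refine ⟨?_, ?_, ?_, ?_⟩
    · exact hU.1
    · exact (hsigns _ hU).1
    · exact (hsigns _ hU).2
    · have h3 := keyHess (x, z) hU
      simp only at h3
      exact h3
  · -- part (ii)
    intro x hx
    set d : EuclideanSpace ℝ (Fin p) := x - xs with hddef
    have hxd : ‖d‖ ≤ ε/2 := hx
    have hseg : ∀ t : ℝ, t ∈ Set.Icc (0:ℝ) 1 →
        ((xs + t • d, zs) : EuclideanSpace ℝ (Fin p) × EuclideanSpace ℝ (Fin m)) ∈ U := by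
      intro t ht
      apply hballU
      rw [Metric.mem_ball, Prod.dist_eq]
      obtain ⟨ht0, ht1⟩ := ht
      apply max_lt
      · rw [dist_eq_norm]
        have : xs + t • d - xs = t • d := by abel
        rw [this, norm_smul, Real.norm_eq_abs, abs_of_nonneg ht0]
        nlinarith [norm_nonneg d]
      · rw [dist_self]
        exact hεpos
    have hxU : ((x, zs) : EuclideanSpace ℝ (Fin p) × EuclideanSpace ℝ (Fin m)) ∈ U := by
      have := hseg 1 ⟨zero_le_one, le_refl 1⟩
      rw [one_smul, hddef] at this
      have e : xs + (x - xs) = x := by abel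
      rwa [e] at this
    -- the two auxiliary one-variable functions
    set hF : ℝ → ℝ := fun u => g (xs + u • d) + ⟪ys, A (xs + u • d) - b⟫
        + β/2 * ⟪A (xs + u • d) - b, A (xs + u • d) - b⟫
        + ∑ j ∈ J, (zs j * f j (xs + u • d) + β/2 * (f j (xs + u • d))^2)
        - μ/4 * (‖d‖^2 * u^2) with hFdef
    set hF1 : ℝ → ℝ := fun u => ⟪g' (xs + u • d), d⟫ + ⟪ys, A d⟫
        + β * ⟪A (xs + u • d) - b, A d⟫
        + ∑ j ∈ J, ((zs j + β * f j (xs + u • d)) * ⟪f' j (xs + u • d), d⟫)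
        - μ/2 * (‖d‖^2 * u) with hF1def
    have hc : ∀ t : ℝ, HasDerivAt (fun u : ℝ => xs + u • d) d t := by
      intro t
      simpa using ((hasDerivAt_id t).smul_const d).const_add xs
    have hw : ∀ t : ℝ, HasDerivAt (fun u : ℝ => A (xs + u • d) - b) (A d) t := fun t =>
      (A.hasFDerivAt.comp_hasDerivAt t (hc t)).sub_const b
    have hfd : ∀ (j : Fin m) (t : ℝ),
        HasDerivAt (fun u : ℝ => f j (xs + u • d)) ⟪f' j (xs + t • d), d⟫ t := by
      intro j t
      have := (hf j (xs + t • d)).hasFDerivAt.comp_hasDerivAt t (hc t)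
      simp at this
      exact this
    have hh : ∀ t : ℝ, HasDerivAt hF (hF1 t) t := by
      intro t
      rw [hFdef, hF1def]
      have H1 : HasDerivAt (fun u : ℝ => g (xs + u • d)) ⟪g' (xs + t • d), d⟫ t := by
        have := (hg (xs + t • d)).hasFDerivAt.comp_hasDerivAt t (hc t)
        simp at this
        exact this
      have H2 : HasDerivAt (fun u : ℝ => ⟪ys, A (xs + u • d) - b⟫) ⟪ys, A d⟫ t := by
        simpa using (hasDerivAt_const t ys).inner (𝕜 := ℝ) (hw t)
      have H3 : HasDerivAt (fun u : ℝ => β/2 * ⟪A (xs + u • d) - b, A (xs + u • d) - b⟫)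
          (β * ⟪A (xs + t • d) - b, A d⟫) t := by
        have := ((hw t).inner (𝕜 := ℝ) (hw t)).const_mul (β/2)
        refine this.congr_deriv ?_
        rw [real_inner_comm (A d) (A (xs + t • d) - b)]
        ring
      have H4 : ∀ j ∈ J, HasDerivAt
          (fun u : ℝ => zs j * f j (xs + u • d) + β/2 * (f j (xs + u • d))^2)
          ((zs j + β * f j (xs + t • d)) * ⟪f' j (xs + t • d), d⟫) t := by
        intro j _
        have := ((hfd j t).const_mul (zs j)).add (((hfd j t).pow 2).const_mul (β/2))
        refine this.congr_deriv ?_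
        ring
      have H5 : HasDerivAt (fun u : ℝ => μ/4 * (‖d‖^2 * u^2)) (μ/2 * (‖d‖^2 * t)) t := by
        have := ((hasDerivAt_pow 2 t).const_mul (‖d‖^2)).const_mul (μ/4)
        refine this.congr_deriv ?_
        ring
      exact (((H1.add H2).add H3).add (HasDerivAt.fun_sum H4)).sub H5
    have hh1 : ∀ t : ℝ, HasDerivAt hF1
        (⟪d, (HessL β f f' g'' f'' A J (xs + t • d) zs) d⟫ - μ/2 * ‖d‖^2) t := by
      intro t
      rw [hF1def]
      have K1 : HasDerivAt (fun u : ℝ => ⟪g' (xs + u • d), d⟫)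
          ⟪g'' (xs + t • d) d, d⟫ t := by
        simpa using ((hg'' (xs + t • d)).comp_hasDerivAt t (hc t)).inner (𝕜 := ℝ)
          (hasDerivAt_const t d)
      have K2 : HasDerivAt (fun _ : ℝ => ⟪ys, A d⟫) 0 t := hasDerivAt_const _ _
      have K3 : HasDerivAt (fun u : ℝ => β * ⟪A (xs + u • d) - b, A d⟫)
          (β * ⟪A d, A d⟫) t := by
        simpa using ((hw t).inner (𝕜 := ℝ) (hasDerivAt_const t (A d))).const_mul β
      have K4 : ∀ j ∈ J, HasDerivAt
          (fun u : ℝ => (zs j + β * f j (xs + u • d)) * ⟪f' j (xs + u • d), d⟫)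
          (β * ⟪f' j (xs + t • d), d⟫ * ⟪f' j (xs + t • d), d⟫
            + (zs j + β * f j (xs + t • d)) * ⟪f'' j (xs + t • d) d, d⟫) t := by
        intro j _
        have hf'd : HasDerivAt (fun u : ℝ => ⟪f' j (xs + u • d), d⟫)
            ⟪f'' j (xs + t • d) d, d⟫ t := by
          simpa using ((hf'' j (xs + t • d)).comp_hasDerivAt t (hc t)).inner (𝕜 := ℝ)
            (hasDerivAt_const t d)
        have := (((hfd j t).const_mul β).const_add (zs j)).mul hf'd
        exact this
      have K5 : HasDerivAt (fun u : ℝ => μ/2 * (‖d‖^2 * u)) (μ/2 * ‖d‖^2) t := by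
        simpa using ((hasDerivAt_id t).const_mul (‖d‖^2)).const_mul (μ/2)
      have Kall := (((K1.add K2).add K3).add (HasDerivAt.fun_sum K4)).sub K5
      refine Kall.congr_deriv ?_
      rw [evalHess]
      ring
    -- `hF1 0 = 0` from the KKT conditions
    have hstat : ⟪g' xs, d⟫ + ⟪ys, A d⟫ + ∑ j ∈ J, zs j * ⟪f' j xs, d⟫ = 0 := by
      have h0 := congrArg (fun v => ⟪v, d⟫) hkkt
      simp only [inner_add_left, sum_inner, real_inner_smul_left, inner_zero_left,
        ContinuousLinearMap.adjoint_inner_left] at h0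
      rw [← Finset.sum_subset (Finset.subset_univ J)
        (fun j _ hj => by rw [(hJout j hj).2]; ring)] at h0
      linarith
    have hm0 : hF1 0 = 0 := by
      rw [hF1def]
      show ⟪g' (xs + (0:ℝ) • d), d⟫ + ⟪ys, A d⟫
        + β * ⟪A (xs + (0:ℝ) • d) - b, A d⟫
        + ∑ j ∈ J, ((zs j + β * f j (xs + (0:ℝ) • d)) * ⟪f' j (xs + (0:ℝ) • d), d⟫)
        - μ/2 * (‖d‖^2 * 0) = 0
      rw [zero_smul, add_zero, hkkt2, sub_self, inner_zero_left]
      rw [Finset.sum_congr rfl (fun j hj => by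
        rw [(hJin j hj).1, mul_zero, add_zero] :
        ∀ j ∈ J, (zs j + β * f j xs) * ⟪f' j xs, d⟫ = zs j * ⟪f' j xs, d⟫)]
      linarith [hstat]
    -- monotonicity
    have hmono1 : MonotoneOn hF1 (Set.Icc (0:ℝ) 1) := by
      apply monotoneOn_of_deriv_nonneg (convex_Icc 0 1)
      · exact fun t _ => (hh1 t).continuousAt.continuousWithinAt
      · exact fun t _ => (hh1 t).differentiableAt.differentiableWithinAt
      · intro t ht
        rw [interior_Icc] at ht
        rw [(hh1 t).deriv]
        have h1 := keyHess _ (hseg t ⟨ht.1.le, ht.2.le⟩) d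
        simp only at h1
        linarith
    have hmono : MonotoneOn hF (Set.Icc (0:ℝ) 1) := by
      apply monotoneOn_of_deriv_nonneg (convex_Icc 0 1)
      · exact fun t _ => (hh t).continuousAt.continuousWithinAt
      · exact fun t _ => (hh t).differentiableAt.differentiableWithinAt
      · intro t ht
        rw [interior_Icc] at ht
        rw [(hh t).deriv]
        have := hmono1 ⟨le_refl 0, zero_le_one⟩ ⟨ht.1.le, ht.2.le⟩ ht.1.le
        rw [hm0] at this
        exact this
    have hfinal : hF 0 ≤ hF 1 :=
      hmono ⟨le_refl 0, zero_le_one⟩ ⟨zero_le_one, le_refl 1⟩ zero_le_one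
    -- evaluate the endpoints
    have hc0 : xs + (0:ℝ) • d = xs := by rw [zero_smul, add_zero]
    have hc1 : xs + (1:ℝ) • d = x := by rw [one_smul, hddef]; abel
    have e0 : hF 0 = g xs := by
      rw [hFdef]
      show g (xs + (0:ℝ) • d) + ⟪ys, A (xs + (0:ℝ) • d) - b⟫
        + β/2 * ⟪A (xs + (0:ℝ) • d) - b, A (xs + (0:ℝ) • d) - b⟫
        + ∑ j ∈ J, (zs j * f j (xs + (0:ℝ) • d) + β/2 * (f j (xs + (0:ℝ) • d))^2)
        - μ/4 * (‖d‖^2 * 0^2) = g xs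
      rw [hc0, hkkt2, sub_self, inner_zero_right, inner_zero_left]
      rw [Finset.sum_eq_zero (fun j hj => by rw [(hJin j hj).1]; ring :
        ∀ j ∈ J, zs j * f j xs + β/2 * (f j xs)^2 = 0)]
      ring
    have e1 : hF 1 = g x + ⟪ys, A x - b⟫ + β/2 * ‖A x - b‖^2
        + ∑ j ∈ J, (zs j * f j x + β/2 * (f j x)^2) - μ/4 * ‖d‖^2 := by
      rw [hFdef]
      show g (xs + (1:ℝ) • d) + ⟪ys, A (xs + (1:ℝ) • d) - b⟫
        + β/2 * ⟪A (xs + (1:ℝ) • d) - b, A (xs + (1:ℝ) • d) - b⟫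
        + ∑ j ∈ J, (zs j * f j (xs + (1:ℝ) • d) + β/2 * (f j (xs + (1:ℝ) • d))^2)
        - μ/4 * (‖d‖^2 * 1^2) = _
      rw [hc1, real_inner_self_eq_norm_sq]
      ring
    have hPsix : PsiAug β f x zs = ∑ j ∈ J, (zs j * f j x + β/2 * (f j x)^2) :=
      hPsiW x (hsigns _ hxU).1 (hsigns _ hxU).2
    rw [hPsix, hPsixs]
    rw [e0, e1] at hfinal
    linarith


end
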